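/- Let E be a real inner product space, let F : E → ℝ be strictly convex and differentiable, let K be a positive integer, let p_1, …, p_K be nonnegative real weights with p_1 + ⋯ + p_K = 1, and let D^1, …, D^K be points of E. Set h* = Σ_{k=1}^K p_k · D^k. Then h* is the unique minimizer of the map h ↦ Σ_{k=1}^K p_k · B_F(D^k, h); that is, if h ∈ E satisfies Σ_{k=1}^K p_k · B_F(D^k, h) ≤ Σ_{k=1}^K p_k · B_F(D^k, h') for all h' ∈ E, then h = h*. -/

import Mathlib

open scoped RealInnerProductSpace BigOperators

/-- The Bregman divergence of `x` from `y` associated with a differentiable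
function `F : E → ℝ`: `B_F(x, y) = F x - F y - ⟪∇F(y), x - y⟫`. -/
noncomputable def bregman {E : Type*} [NormedAddCommGroup E] [InnerProductSpace ℝ E]
    [CompleteSpace E] (F : E → ℝ) (x y : E) : ℝ :=
  F x - F y - ⟪gradient F y, x - y⟫

lemma bregman_pos {E : Type*} [NormedAddCommGroup E] [InnerProductSpace ℝ E]
    [CompleteSpace E] {F : E → ℝ} (hFconv : StrictConvexOn ℝ Set.univ F)
    (hFdiff : Differentiable ℝ F) {x y : E} (hxy : x ≠ y) : 0 < bregman F x y := by
  set v := x - y with hv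
  have hv0 : v ≠ 0 := sub_ne_zero.mpr hxy
  set g : ℝ → ℝ := fun t => F (y + t • v) with hg
  have hginj : Function.Injective fun t : ℝ => y + t • v := by
    intro a b hab
    simp only [add_right_injective] at hab
    exact smul_left_injective ℝ hv0 (by simpa using hab)
  have hgconv : StrictConvexOn ℝ Set.univ g := by
    refine ⟨convex_univ, fun a _ b _ hab s t hs ht hst => ?_⟩
    have hne : y + a • v ≠ y + b • v := fun hEq => hab (hginj hEq)
    have := hFconv.2 (Set.mem_univ (y + a • v)) (Set.mem_univ (y + b • v)) hne hs ht hst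
    have heq : s • (y + a • v) + t • (y + b • v) = y + (s * a + t * b) • v := by
      rw [show s • (y + a • v) + t • (y + b • v)
        = (s + t) • y + (s * a + t * b) • v by module, hst, one_smul]
    rw [heq] at this
    simpa [hg, smul_eq_mul] using this
  have hgd : ∀ t : ℝ, HasDerivAt g ⟪gradient F (y + t • v), v⟫ t := by
    intro t
    have h1 : HasDerivAt (fun t : ℝ => y + t • v) v t := by
      simpa using ((hasDerivAt_id t).smul_const v).const_add y
    have h2 : HasFDerivAt F (InnerProductSpace.toDual ℝ E (gradient F (y + t • v)))
        (y + t • v) := (hFdiff (y + t • v)).hasGradientAt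
    exact (by simpa using h2.comp_hasDerivAt t h1 :
      HasDerivAt (F ∘ fun t : ℝ => y + t • v) ⟪gradient F (y + t • v), v⟫ t)
  have hlt : ⟪gradient F y, v⟫ < slope g 0 1 := by
    have h0 : HasDerivAt g ⟪gradient F y, v⟫ 0 := by simpa using hgd 0
    exact hgconv.lt_slope_of_hasDerivAt (Set.mem_univ 0) (Set.mem_univ 1) one_pos h0
  have hslope : slope g 0 1 = F x - F y := by
    simp [slope, hg, hv]
  rw [hslope] at hlt
  simpa [bregman, hv] using sub_pos.mpr hlt

/-- If `F` is strictly convex and differentiable, then `h* = ∑ k, p k • D k` is the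
unique minimizer of `h ↦ ∑ k, p k * B_F(D k, h)`: any minimizer equals `h*`. -/
theorem bregman_weighted_sum_unique_minimizer
    {E : Type*} [NormedAddCommGroup E] [InnerProductSpace ℝ E] [CompleteSpace E]
    (F : E → ℝ) (hFconv : StrictConvexOn ℝ Set.univ F) (hFdiff : Differentiable ℝ F)
    (K : ℕ) (hK : 0 < K) (p : Fin K → ℝ) (hp : ∀ k, 0 ≤ p k)
    (hpsum : ∑ k, p k = 1) (D : Fin K → E) (h : E)
    (hmin : ∀ h' : E,
      ∑ k, p k * bregman F (D k) h ≤ ∑ k, p k * bregman F (D k) h') :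
    h = ∑ k, p k • D k := by
  set hstar : E := ∑ k, p k • D k with hhstar
  have key : ∀ h' : E, ∑ k, p k * bregman F (D k) h' =
      (∑ k, p k * F (D k)) - F hstar + bregman F hstar h' := by
    intro h'
    have hsub : hstar - h' = ∑ k, p k • (D k - h') := by
      simp [smul_sub, Finset.sum_sub_distrib, ← Finset.sum_smul, hpsum, hhstar]
    have hInner : ⟪gradient F h', hstar - h'⟫ = ∑ k, p k * ⟪gradient F h', D k - h'⟫ := by
      rw [hsub, inner_sum]
      simp [real_inner_smul_right]
    simp only [bregman, mul_sub, Finset.sum_sub_distrib, ← Finset.sum_mul, hpsum,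
      one_mul, hInner]
    ring
  have h1 := hmin hstar
  rw [key h, key hstar] at h1
  have h2 : bregman F hstar hstar = 0 := by simp [bregman]
  rw [h2] at h1
  by_contra hne
  have := bregman_pos hFconv hFdiff (x := hstar) (y := h) (Ne.symm hne)
  linarith
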